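/- arXiv:1701.02964 — 2 statements merged into one kernel-verified Lean document; each statement's English description precedes it below -/
import Mathlib

section
/- Let k ≥ 2 and let F : ℍ → ℂ be holomorphic on the upper half-plane ℍ, and let V = [[a,b],[c,d]] ∈ SL₂(ℝ) with cz + d ≠ 0 for the given z ∈ ℍ. Writing D = (1/(2πi)) d/dz, Bol's identity holds: (D^{k−1}F)(Vz)/(cz+d)^k = D^{k−1}[ (cz+d)^{k−2} F(Vz) ], where Vz = (az+b)/(cz+d). -/
open Complex

/-- The normalized derivative `D = (1/(2πi)) d/dz`. -/
noncomputable def Dop (f : ℂ → ℂ) : ℂ → ℂ :=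
  fun z => (1 / (2 * (Real.pi : ℂ) * Complex.I)) * deriv f z

open Finset


noncomputable def bolA (n : ℕ) : ℕ → ℕ → ℂ
  | 0, 0 => 1
  | 0, _+1 => 0
  | j+1, 0 => bolA n j 0 * ((n : ℂ) - 1 - j)
  | j+1, i+1 => bolA n j (i+1) * ((n : ℂ) - 1 - j - (i+1)) + bolA n j i

lemma bolA_eq_zero (n : ℕ) : ∀ j i, j < i → bolA n j i = 0 := by
  intro j
  induction j with
  | zero => intro i hi; match i, hi with | i+1, _ => rfl
  | succ j ih =>
    intro i hi
    match i, hi with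
    | i+1, hi =>
      have h1 : bolA n j (i+1) = 0 := ih _ (by omega)
      have h2 : bolA n j i = 0 := ih _ (by omega)
      simp [bolA, h1, h2]

lemma bolA_closed (n : ℕ) : ∀ j, j < n → ∀ i,
    bolA n j i = (j.choose i : ℂ) * ((n - 1 - i).factorial : ℂ) / ((n - 1 - j).factorial : ℂ) := by
  intro j
  induction j with
  | zero =>
    intro _ i
    cases i with
    | zero =>
      simp [bolA, div_self (show ((n-1).factorial : ℂ) ≠ 0 by exact_mod_cast Nat.factorial_ne_zero _)]
    | succ i => simp [bolA, Nat.choose_eq_zero_of_lt (by omega : (0:ℕ) < i+1)]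
  | succ j ih =>
    intro hj i
    have hj' : j < n := by omega
    have hsub : n - 1 - j = (n - 1 - (j+1)) + 1 := by omega
    have hfac : ((n - 1 - j).factorial : ℂ) = ((n - 1 - j : ℕ) : ℂ) * ((n - 1 - (j+1)).factorial : ℂ) := by
      rw [hsub, Nat.factorial_succ]; push_cast; ring
    have hne : ((n - 1 - (j+1)).factorial : ℂ) ≠ 0 := by
      exact_mod_cast Nat.factorial_ne_zero _
    have hne' : ((n - 1 - j).factorial : ℂ) ≠ 0 := by
      exact_mod_cast Nat.factorial_ne_zero _
    have hcastj : ((n : ℂ) - 1 - j) = ((n - 1 - j : ℕ) : ℂ) := by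
      have : (n : ℤ) - 1 - j = ((n - 1 - j : ℕ) : ℤ) := by omega
      exact_mod_cast congrArg (Int.cast : ℤ → ℂ) this
    cases i with
    | zero =>
      rw [show bolA n (j+1) 0 = bolA n j 0 * ((n : ℂ) - 1 - j) from rfl, ih hj' 0, hcastj, hfac]
      have hc : ((n - 1 - j : ℕ) : ℂ) ≠ 0 := Nat.cast_ne_zero.mpr (by omega)
      field_simp
      simp only [Nat.choose_zero_right]
      ring
    | succ i =>
      rw [show bolA n (j+1) (i+1) = bolA n j (i+1) * ((n : ℂ) - 1 - j - (i+1)) + bolA n j i from rfl,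
        ih hj' (i+1), ih hj' i]
      by_cases hij : i + 1 ≤ j + 1
      · -- main case: i ≤ j
        have hi_le : i ≤ j := by omega
        have hfaci : ((n - 1 - i).factorial : ℂ) = ((n - 1 - i : ℕ) : ℂ) * ((n - 1 - (i+1)).factorial : ℂ) := by
          rw [show n - 1 - i = (n - 1 - (i+1)) + 1 by omega, Nat.factorial_succ]; push_cast; ring
        have hcasti : ((n : ℂ) - 1 - i) = ((n - 1 - i : ℕ) : ℂ) := by
          have : (n : ℤ) - 1 - i = ((n - 1 - i : ℕ) : ℤ) := by omega
          exact_mod_cast congrArg (Int.cast : ℤ → ℂ) this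
        rw [hfac, hfaci]
        have hcne : ((n - 1 - j : ℕ) : ℂ) ≠ 0 := Nat.cast_ne_zero.mpr (by omega)
        have key : (j.choose (i+1) : ℂ) * ((n:ℂ) - 1 - j - (i+1)) + (j.choose i : ℂ) * ((n:ℂ) - 1 - i)
            = ((j+1).choose (i+1) : ℂ) * ((n:ℂ) - 1 - j) := by
          have p1 : ((j+1).choose (i+1) : ℂ) = (j.choose (i+1) : ℂ) + (j.choose i : ℂ) := by
            rw [Nat.choose_succ_succ]; push_cast; ring
          have p2 : (j.choose (i+1) : ℂ) * (i+1) = (j.choose i : ℂ) * ((j : ℂ) - i) := by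
            have h2 := Nat.choose_succ_right_eq j i
            have hji : ((j - i : ℕ) : ℂ) = (j : ℂ) - i := by
              have : ((j - i : ℕ) : ℤ) = (j : ℤ) - i := by omega
              exact_mod_cast congrArg (Int.cast : ℤ → ℂ) this
            calc (j.choose (i+1) : ℂ) * (i+1) = ((j.choose (i+1) * (i+1) : ℕ) : ℂ) := by push_cast; ring
              _ = ((j.choose i * (j - i) : ℕ) : ℂ) := by rw [h2]
              _ = (j.choose i : ℂ) * ((j:ℂ) - i) := by push_cast [hji]; ring
          rw [p1]; linear_combination (-1 : ℂ) * p2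
        have step : (j.choose (i+1) : ℂ) * ((n-1-(i+1)).factorial : ℂ) / (((n-1-j:ℕ):ℂ) * ((n-1-(j+1)).factorial : ℂ)) * ((n:ℂ) - 1 - (j:ℂ) - ((i:ℂ)+1))
            + (j.choose i : ℂ) * (((n-1-i:ℕ):ℂ) * ((n-1-(i+1)).factorial : ℂ)) / (((n-1-j:ℕ):ℂ) * ((n-1-(j+1)).factorial : ℂ))
            = ((j.choose (i+1) : ℂ) * ((n:ℂ) - 1 - j - ((i:ℂ)+1)) + (j.choose i : ℂ) * ((n:ℂ) - 1 - i)) * ((n-1-(i+1)).factorial : ℂ) / (((n-1-j:ℕ):ℂ) * ((n-1-(j+1)).factorial : ℂ)) := by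
          rw [← hcasti]; ring
        push_cast at step ⊢
        rw [step, key, hcastj, div_eq_div_iff (mul_ne_zero hcne hne) hne]
        ring
      · -- degenerate: i ≥ j+1, everything vanishes
        have e1 : j.choose (i+1) = 0 := Nat.choose_eq_zero_of_lt (by omega)
        have e2 : j.choose i = 0 := Nat.choose_eq_zero_of_lt (by omega)
        have e3 : (j+1).choose (i+1) = 0 := Nat.choose_eq_zero_of_lt (by omega)
        simp [e1, e2, e3]

lemma bolA_diag (n : ℕ) : ∀ j, bolA n j j = 1 := by
  intro j
  induction j with
  | zero => rfl
  | succ j ih =>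
    show bolA n j (j+1) * _ + bolA n j j = 1
    rw [bolA_eq_zero n j (j+1) (by omega), ih]; ring

lemma bolA_top (n : ℕ) (hn : 1 ≤ n) (i : ℕ) :
    bolA n n i = if i = n then 1 else 0 := by
  rcases lt_trichotomy i n with h | h | h
  · rw [if_neg (by omega)]
    obtain ⟨m, hm⟩ : ∃ m, n = m + 1 := ⟨n - 1, by omega⟩
    subst hm
    have hmn : m < m + 1 := by omega
    have hz : ((m+1:ℕ) : ℂ) - 1 - (m : ℂ) = 0 := by push_cast; ring
    have hfac0 : (m + 1) - 1 - m = 0 := by omega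
    cases i with
    | zero =>
      show bolA (m+1) m 0 * (((m+1:ℕ) : ℂ) - 1 - (m:ℂ)) = 0
      rw [hz, mul_zero]
    | succ i =>
      show bolA (m+1) m (i+1) * (((m+1:ℕ):ℂ) - 1 - (m:ℂ) - ((i:ℂ)+1)) + bolA (m+1) m i = 0
      rw [bolA_closed (m+1) m hmn (i+1), bolA_closed (m+1) m hmn i, hfac0]
      simp only [Nat.factorial_zero, Nat.cast_one, div_one]
      have hile : i + 1 ≤ m := by omega
      have hfaci : (((m+1) - 1 - i).factorial : ℂ) = (((m+1) - 1 - i : ℕ) : ℂ) * (((m+1) - 1 - (i+1)).factorial : ℂ) := by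
        rw [show (m+1) - 1 - i = ((m+1) - 1 - (i+1)) + 1 by omega, Nat.factorial_succ]; push_cast; ring
      have hcr : (m.choose (i+1) : ℂ) * ((i:ℂ)+1) = (m.choose i : ℂ) * (((m+1) - 1 - i : ℕ) : ℂ) := by
        have h2 := Nat.choose_succ_right_eq m i
        have h3 : ((m.choose (i+1) * (i+1) : ℕ) : ℂ) = ((m.choose i * (m - i) : ℕ) : ℂ) := by rw [h2]
        rw [show (m+1) - 1 - i = m - i by omega]
        push_cast at h3 ⊢
        linear_combination h3
      rw [hfaci]
      simp only [show m+1-1-(i+1) = m-(i+1) from by omega, show m+1-1-i = m-i from by omega] at *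
      push_cast at hcr ⊢
      linear_combination (-(((m-(i+1)).factorial : ℂ))) * hcr
  · rw [if_pos h]
    subst h
    exact bolA_diag _ _
  · rw [if_neg (by omega)]
    exact bolA_eq_zero n n i h


section
variable {a b c d : ℝ}

lemma bol_u_ne (hV : a * d - b * c = 1) {z : ℂ} (hz : 0 < z.im) :
    (c : ℂ) * z + d ≠ 0 := by
  intro h
  have h1 : c * z.im = 0 := by
    have := congrArg Complex.im h
    simpa [Complex.add_im, Complex.mul_im] using this
  have hc : c = 0 := by
    rcases mul_eq_zero.mp h1 with hc | hzim
    · exact hc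
    · exact absurd hzim hz.ne'
  have h2 : d = 0 := by
    have := congrArg Complex.re h
    simpa [hc, Complex.add_re, Complex.mul_re] using this
  rw [hc, h2] at hV; norm_num at hV

lemma bol_im_pos (hV : a * d - b * c = 1) {z : ℂ} (hz : 0 < z.im) :
    0 < (((a : ℂ) * z + b) / ((c : ℂ) * z + d)).im := by
  have hne := bol_u_ne hV hz
  have hnsq : 0 < Complex.normSq ((c : ℂ) * z + d) := by
    simpa [Complex.normSq_pos] using hne
  have h2 : (((a : ℂ) * z + b) / ((c : ℂ) * z + d)).im
      = z.im / Complex.normSq ((c : ℂ) * z + d) := by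
    rw [Complex.div_im]
    simp only [Complex.add_im, Complex.add_re, Complex.mul_im, Complex.mul_re,
      Complex.ofReal_re, Complex.ofReal_im]
    field_simp
    ring_nf
    linear_combination z.im * hV
  rw [h2]
  positivity

lemma bol_hasDerivAt_V (hV : a * d - b * c = 1) {z : ℂ} (hz : 0 < z.im) :
    HasDerivAt (fun w : ℂ => ((a : ℂ) * w + b) / ((c : ℂ) * w + d))
      (((c : ℂ) * z + d) ^ (-2 : ℤ)) z := by
  have hne := bol_u_ne hV hz
  have hN : HasDerivAt (fun w : ℂ => (a : ℂ) * w + b) (a : ℂ) z := by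
    simpa using ((hasDerivAt_id z).const_mul (a : ℂ)).add_const (b : ℂ)
  have hD : HasDerivAt (fun w : ℂ => (c : ℂ) * w + d) (c : ℂ) z := by
    simpa using ((hasDerivAt_id z).const_mul (c : ℂ)).add_const (d : ℂ)
  have h := hN.div hD hne
  refine h.congr_deriv (Eq.symm ?_)
  have hdet : (a : ℂ) * d - b * c = 1 := by exact_mod_cast congrArg (Complex.ofReal) hV
  have : (a : ℂ) * ((c:ℂ) * z + d) - ((a:ℂ) * z + b) * c = 1 := by linear_combination hdet
  rw [this, zpow_neg]
  norm_num
end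

section
variable {a b c d : ℝ}

lemma bol_sum_formula (F : ℂ → ℂ) (hF : DifferentiableOn ℂ F {z : ℂ | 0 < z.im})
    (hV : a * d - b * c = 1) (n : ℕ) (j : ℕ) :
    ∀ z : ℂ, 0 < z.im →
    deriv^[j] (fun w => ((c : ℂ) * w + d) ^ ((n : ℤ) - 1)
        * F (((a : ℂ) * w + b) / ((c : ℂ) * w + d))) z
      = ∑ i ∈ Finset.range (j + 1), bolA n j i * (c : ℂ) ^ (j - i)
          * ((c : ℂ) * z + d) ^ ((n : ℤ) - 1 - j - i)
          * (deriv^[i] F) (((a : ℂ) * z + b) / ((c : ℂ) * z + d)) := by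
  have hS : IsOpen {z : ℂ | 0 < z.im} := by
    exact isOpen_lt continuous_const Complex.continuous_im
  have hAn : ∀ i, AnalyticOnNhd ℂ (deriv^[i] F) {z : ℂ | 0 < z.im} := by
    intro i
    induction i with
    | zero => exact hF.analyticOnNhd hS
    | succ i ih => rw [Function.iterate_succ']; exact ih.deriv
  induction j with
  | zero =>
    intro z hz
    simp [bolA]
  | succ j ih =>
    intro z hz
    have hne := bol_u_ne hV hz
    rw [Function.iterate_succ_apply']
    have hev : deriv^[j] (fun w => ((c : ℂ) * w + d) ^ ((n : ℤ) - 1)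
          * F (((a : ℂ) * w + b) / ((c : ℂ) * w + d)))
        =ᶠ[nhds z] (fun z => ∑ i ∈ Finset.range (j + 1), bolA n j i * (c : ℂ) ^ (j - i)
          * ((c : ℂ) * z + d) ^ ((n : ℤ) - 1 - j - i)
          * (deriv^[i] F) (((a : ℂ) * z + b) / ((c : ℂ) * z + d))) := by
      filter_upwards [hS.mem_nhds hz] with w hw
      exact ih w hw
    rw [hev.deriv_eq]
    -- derivative of each summand
    have hu : HasDerivAt (fun w : ℂ => (c : ℂ) * w + d) (c : ℂ) z := by
      simpa using ((hasDerivAt_id z).const_mul (c : ℂ)).add_const (d : ℂ)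
    have hVz : 0 < ((((a : ℂ) * z + b) / ((c : ℂ) * z + d))).im := bol_im_pos hV hz
    have hterm : ∀ i ∈ Finset.range (j + 1),
        HasDerivAt (fun w => bolA n j i * (c : ℂ) ^ (j - i)
          * ((c : ℂ) * w + d) ^ ((n : ℤ) - 1 - j - i)
          * (deriv^[i] F) (((a : ℂ) * w + b) / ((c : ℂ) * w + d)))
        (bolA n j i * ((n : ℂ) - 1 - j - i) * (c : ℂ) ^ (j + 1 - i)
            * ((c : ℂ) * z + d) ^ ((n : ℤ) - 2 - j - i)
            * (deriv^[i] F) (((a : ℂ) * z + b) / ((c : ℂ) * z + d))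
          + bolA n j i * (c : ℂ) ^ (j - i)
            * ((c : ℂ) * z + d) ^ ((n : ℤ) - 3 - j - i)
            * (deriv^[i + 1] F) (((a : ℂ) * z + b) / ((c : ℂ) * z + d))) z := by
      intro i hi
      have hile : i ≤ j := by simpa [Nat.lt_succ_iff] using hi
      have hzp : HasDerivAt (fun w : ℂ => ((c : ℂ) * w + d) ^ ((n : ℤ) - 1 - j - i))
          ((((n : ℤ) - 1 - j - i : ℤ) : ℂ) * ((c : ℂ) * z + d) ^ ((n : ℤ) - 1 - j - i - 1) * c) z := by
        exact (hasDerivAt_zpow ((n : ℤ) - 1 - j - i) _ (Or.inl hne)).comp z hu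
      have hT : HasDerivAt (fun w => (deriv^[i] F) (((a : ℂ) * w + b) / ((c : ℂ) * w + d)))
          ((deriv^[i + 1] F) (((a : ℂ) * z + b) / ((c : ℂ) * z + d))
            * ((c : ℂ) * z + d) ^ (-2 : ℤ)) z := by
        have hdiff : DifferentiableAt ℂ (deriv^[i] F)
            (((a : ℂ) * z + b) / ((c : ℂ) * z + d)) :=
          ((hAn i) _ hVz).differentiableAt
        have hcomp := ((hdiff.hasDerivAt).comp z (bol_hasDerivAt_V hV hz))
        have : deriv (deriv^[i] F) (((a : ℂ) * z + b) / ((c : ℂ) * z + d))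
            = (deriv^[i + 1] F) (((a : ℂ) * z + b) / ((c : ℂ) * z + d)) := by
          rw [Function.iterate_succ_apply']
        rwa [this] at hcomp
      have hmul := (hzp.mul hT).const_mul (bolA n j i * (c : ℂ) ^ (j - i))
      have heq : (fun w => bolA n j i * (c : ℂ) ^ (j - i)
          * ((c : ℂ) * w + d) ^ ((n : ℤ) - 1 - j - i)
          * (deriv^[i] F) (((a : ℂ) * w + b) / ((c : ℂ) * w + d)))
          = fun y => bolA n j i * (c : ℂ) ^ (j - i)
          * (((c : ℂ) * y + d) ^ ((n : ℤ) - 1 - j - i)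
            * (deriv^[i] F) (((a : ℂ) * y + b) / ((c : ℂ) * y + d))) := by
        funext y; ring
      rw [heq]
      refine hmul.congr_deriv (Eq.symm ?_)
      have e1 : ((c : ℂ) * z + d) ^ ((n : ℤ) - 1 - j - i - 1)
          = ((c : ℂ) * z + d) ^ ((n : ℤ) - 2 - j - i) := by
        congr 1; ring
      have e2 : ((c : ℂ) * z + d) ^ ((n : ℤ) - 1 - j - i) * ((c : ℂ) * z + d) ^ (-2 : ℤ)
          = ((c : ℂ) * z + d) ^ ((n : ℤ) - 3 - j - i) := by
        rw [← zpow_add₀ hne]; congr 1; ring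
      have e3 : (c : ℂ) ^ (j + 1 - i) = (c : ℂ) ^ (j - i) * c := by
        rw [show j + 1 - i = (j - i) + 1 by omega, pow_succ]
      have e4 : ((((n : ℤ) - 1 - j - i : ℤ)) : ℂ) = (n : ℂ) - 1 - j - i := by push_cast; ring
      rw [e1, e3, e4, ← e2]
      ring
    have hsum := HasDerivAt.fun_sum hterm
    rw [hsum.deriv]
    -- now the purely algebraic sum identity
    rw [Finset.sum_range_succ' (fun i => bolA n (j+1) i * (c : ℂ) ^ (j + 1 - i)
          * ((c : ℂ) * z + d) ^ ((n : ℤ) - 1 - (j+1 : ℕ) - i)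
          * (deriv^[i] F) (((a : ℂ) * z + b) / ((c : ℂ) * z + d))) (j + 1)]
    have hPs : ∀ k ∈ Finset.range (j + 1),
        bolA n (j+1) (k+1) * (c : ℂ) ^ (j + 1 - (k+1))
          * ((c : ℂ) * z + d) ^ ((n : ℤ) - 1 - ((j+1 : ℕ) : ℤ) - ((k+1 : ℕ) : ℤ))
          * (deriv^[k+1] F) (((a : ℂ) * z + b) / ((c : ℂ) * z + d))
        = bolA n j (k+1) * ((n : ℂ) - 1 - (j : ℂ) - ((k+1 : ℕ) : ℂ)) * (c : ℂ) ^ (j + 1 - (k+1))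
            * ((c : ℂ) * z + d) ^ ((n : ℤ) - 2 - ((j : ℕ) : ℤ) - ((k+1 : ℕ) : ℤ))
            * (deriv^[k+1] F) (((a : ℂ) * z + b) / ((c : ℂ) * z + d))
          + bolA n j k * (c : ℂ) ^ (j - k)
            * ((c : ℂ) * z + d) ^ ((n : ℤ) - 3 - ((j : ℕ) : ℤ) - ((k : ℕ) : ℤ))
            * (deriv^[k+1] F) (((a : ℂ) * z + b) / ((c : ℂ) * z + d)) := by
      intro k hk
      rw [show bolA n (j+1) (k+1)
          = bolA n j (k+1) * ((n : ℂ) - 1 - j - ((k : ℂ)+1)) + bolA n j k from rfl]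
      have c1 : ((n : ℂ) - 1 - (j : ℂ) - ((k : ℂ) + 1)) = ((n : ℂ) - 1 - (j : ℂ) - ((k+1 : ℕ) : ℂ)) := by
        push_cast; ring
      have c2 : ((n : ℤ) - 1 - ((j+1 : ℕ) : ℤ) - ((k+1 : ℕ) : ℤ)) = (n : ℤ) - 2 - ((j : ℕ) : ℤ) - ((k+1 : ℕ) : ℤ) := by
        push_cast; ring
      have c3 : ((c : ℂ) * z + d) ^ ((n : ℤ) - 2 - ((j : ℕ) : ℤ) - ((k+1 : ℕ) : ℤ))
          = ((c : ℂ) * z + d) ^ ((n : ℤ) - 3 - ((j : ℕ) : ℤ) - ((k : ℕ) : ℤ)) := by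
        congr 1; push_cast; ring
      have c4 : j + 1 - (k+1) = j - k := by omega
      rw [c1, c2, c3, c4]
      ring
    rw [Finset.sum_congr rfl hPs, Finset.sum_add_distrib, Finset.sum_add_distrib]
    have hP0 : bolA n (j+1) 0 * (c : ℂ) ^ (j + 1 - 0)
          * ((c : ℂ) * z + d) ^ ((n : ℤ) - 1 - ((j+1 : ℕ) : ℤ) - ((0 : ℕ) : ℤ))
          * (deriv^[0] F) (((a : ℂ) * z + b) / ((c : ℂ) * z + d))
        = bolA n j 0 * ((n : ℂ) - 1 - (j : ℂ) - ((0 : ℕ) : ℂ)) * (c : ℂ) ^ (j + 1 - 0)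
          * ((c : ℂ) * z + d) ^ ((n : ℤ) - 2 - ((j : ℕ) : ℤ) - ((0 : ℕ) : ℤ))
          * (deriv^[0] F) (((a : ℂ) * z + b) / ((c : ℂ) * z + d)) := by
      rw [show bolA n (j+1) 0 = bolA n j 0 * ((n : ℂ) - 1 - j) from rfl]
      have c2 : ((n : ℤ) - 1 - ((j+1 : ℕ) : ℤ) - ((0 : ℕ) : ℤ)) = (n : ℤ) - 2 - ((j : ℕ) : ℤ) - ((0 : ℕ) : ℤ) := by
        push_cast; ring
      rw [c2]
      push_cast
      ring
    rw [hP0]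
    have key := Finset.sum_range_succ' (fun x => bolA n j x * ((n : ℂ) - 1 - (j : ℂ) - (x : ℂ)) * (c : ℂ) ^ (j + 1 - x)
          * ((c : ℂ) * z + d) ^ ((n : ℤ) - 2 - ((j : ℕ) : ℤ) - ((x : ℕ) : ℤ))
          * (deriv^[x] F) (((a : ℂ) * z + b) / ((c : ℂ) * z + d))) (j+1)
    have key2 := Finset.sum_range_succ (fun x => bolA n j x * ((n : ℂ) - 1 - (j : ℂ) - (x : ℂ)) * (c : ℂ) ^ (j + 1 - x)
          * ((c : ℂ) * z + d) ^ ((n : ℤ) - 2 - ((j : ℕ) : ℤ) - ((x : ℕ) : ℤ))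
          * (deriv^[x] F) (((a : ℂ) * z + b) / ((c : ℂ) * z + d))) (j+1)
    beta_reduce at key key2
    have htop : bolA n j (j+1) * ((n : ℂ) - 1 - (j : ℂ) - ((j+1 : ℕ) : ℂ)) * (c : ℂ) ^ (j + 1 - (j+1))
          * ((c : ℂ) * z + d) ^ ((n : ℤ) - 2 - ((j : ℕ) : ℤ) - ((j+1 : ℕ) : ℤ))
          * (deriv^[j+1] F) (((a : ℂ) * z + b) / ((c : ℂ) * z + d)) = 0 := by
      rw [bolA_eq_zero n j (j+1) (by omega)]; ring
    linear_combination key - key2 - htop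
end


lemma iter_deriv_const_mul (u : ℂ) (g : ℂ → ℂ) : ∀ m : ℕ,
    deriv^[m] (fun z => u * g z) = fun z => u * deriv^[m] g z := by
  intro m
  induction m generalizing g with
  | zero => rfl
  | succ m ih =>
    funext z
    rw [Function.iterate_succ_apply, Function.iterate_succ_apply]
    have : deriv (fun z => u * g z) = fun z => u * deriv g z := by
      funext w; exact deriv_const_mul_field u
    rw [this, ih (deriv g)]

lemma Dop_iterate (f : ℂ → ℂ) (m : ℕ) (w : ℂ) :
    Dop^[m] f w = (1 / (2 * (Real.pi : ℂ) * Complex.I)) ^ m * deriv^[m] f w := by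
  induction m generalizing f with
  | zero => simp
  | succ m ih =>
    rw [Function.iterate_succ_apply, ih (Dop f),
      show Dop f = fun z => (1 / (2 * (Real.pi : ℂ) * Complex.I)) * deriv f z from rfl,
      iter_deriv_const_mul, ← Function.iterate_succ_apply, pow_succ]
    ring

theorem bol_identity (k : ℕ) (hk : 2 ≤ k) (F : ℂ → ℂ)
    (hF : DifferentiableOn ℂ F {z : ℂ | 0 < z.im})
    (a b c d : ℝ) (hV : a * d - b * c = 1)
    (z : ℂ) (hz : 0 < z.im) (hcd : (c : ℂ) * z + d ≠ 0) :
    (Dop^[k - 1] F) (((a : ℂ) * z + b) / ((c : ℂ) * z + d)) / ((c : ℂ) * z + d) ^ k =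
      (Dop^[k - 1]
        (fun w => ((c : ℂ) * w + d) ^ (k - 2) * F (((a : ℂ) * w + b) / ((c : ℂ) * w + d)))) z := by
  set n : ℕ := k - 1 with hn
  have hn1 : 1 ≤ n := by omega
  have hfun : (fun w => ((c : ℂ) * w + d) ^ (k - 2) * F (((a : ℂ) * w + b) / ((c : ℂ) * w + d)))
      = (fun w => ((c : ℂ) * w + d) ^ ((n : ℤ) - 1) * F (((a : ℂ) * w + b) / ((c : ℂ) * w + d))) := by
    funext w
    congr 1
    rw [show ((n : ℤ) - 1) = ((k - 2 : ℕ) : ℤ) by omega, zpow_natCast]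
  rw [hfun, Dop_iterate, Dop_iterate, bol_sum_formula F hF hV n n z hz]
  have hsum : ∑ i ∈ Finset.range (n + 1), bolA n n i * (c : ℂ) ^ (n - i)
      * ((c : ℂ) * z + d) ^ ((n : ℤ) - 1 - (n : ℕ) - i)
      * (deriv^[i] F) (((a : ℂ) * z + b) / ((c : ℂ) * z + d))
      = ((c : ℂ) * z + d) ^ ((n : ℤ) - 1 - (n : ℕ) - (n : ℕ))
        * (deriv^[n] F) (((a : ℂ) * z + b) / ((c : ℂ) * z + d)) := by
    rw [Finset.sum_eq_single n]
    · rw [bolA_top n hn1 n, if_pos rfl]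
      simp
    · intro i hi hne
      rw [bolA_top n hn1 i, if_neg hne]
      ring
    · intro h
      exact absurd (Finset.self_mem_range_succ n) h
  rw [hsum]
  have he : ((c : ℂ) * z + d) ^ ((n : ℤ) - 1 - (n : ℕ) - (n : ℕ))
      = (((c : ℂ) * z + d) ^ k)⁻¹ := by
    rw [show ((n : ℤ) - 1 - (n : ℕ) - (n : ℕ)) = -(k : ℤ) by omega, zpow_neg, zpow_natCast]
  rw [he]
  ring
end

section
/- For m ≥ 0, every nonreal complex zero of the Ramanujan polynomial R_{2m+1}(z) = Σ_{n=0}^{m+1} (B_{2n}/(2n)!)(B_{2m−2n+2}/(2m−2n+2)!) z^{2n} lies on the unit circle |z| = 1. -/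
open Finset Real


/-- The Ramanujan polynomial `R_{2m+1}`. -/
noncomputable def ramanujanPoly (m : ℕ) (z : ℂ) : ℂ :=
  ∑ n ∈ Finset.range (m + 2),
    (bernoulli (2 * n) : ℂ) / (Nat.factorial (2 * n) : ℂ) *
      ((bernoulli (2 * m + 2 - 2 * n) : ℂ) / (Nat.factorial (2 * m + 2 - 2 * n) : ℂ)) *
      z ^ (2 * n)

section PS
open PowerSeries
theorem exp_derivative : d⁄dX ℚ (exp ℚ) = exp ℚ := by
  ext n
  rw [PowerSeries.coeff_derivative, coeff_exp, coeff_exp]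
  simp only [Algebra.algebraMap_self, RingHom.id_apply]
  rw [Nat.factorial_succ]
  have : ((n:ℚ)+1) ≠ 0 := by positivity
  push_cast
  field_simp

theorem bps_ode : (bernoulliPowerSeries ℚ) ^ 2 =
    bernoulliPowerSeries ℚ - X * bernoulliPowerSeries ℚ - X * d⁄dX ℚ (bernoulliPowerSeries ℚ) := by
  set B := bernoulliPowerSeries ℚ with hB
  have h1 : B * (exp ℚ - 1) = X := bernoulliPowerSeries_mul_exp_sub_one ℚ
  have h2 := congrArg (d⁄dX ℚ) h1
  rw [Derivation.leibniz, PowerSeries.derivative_X, map_sub, exp_derivative,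
    Derivation.map_one_eq_zero, sub_zero, smul_eq_mul, smul_eq_mul] at h2
  linear_combination B * h2 - (B + d⁄dX ℚ B) * h1

theorem bernoulli_quad (N : ℕ) (hN : 2 ≤ N) :
    ∑ k ∈ range (N+1), (bernoulli k / k.factorial) * (bernoulli (N-k) / (N-k).factorial)
      = (1 - N) * bernoulli N / N.factorial - bernoulli (N-1) / (N-1).factorial := by
  have h := congrArg (PowerSeries.coeff N) bps_ode
  rw [sq, PowerSeries.coeff_mul, Nat.sum_antidiagonal_eq_sum_range_succ_mk] at h
  simp only [map_sub, bernoulliPowerSeries, coeff_mk, Algebra.algebraMap_self, RingHom.id_apply] at h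
  obtain ⟨N', rfl⟩ : ∃ N', N = N' + 1 := ⟨N - 1, by omega⟩
  rw [PowerSeries.coeff_succ_X_mul, PowerSeries.coeff_succ_X_mul, PowerSeries.coeff_derivative,
    coeff_mk] at h
  simp only [bernoulliPowerSeries, coeff_mk] at h
  rw [h]
  have hfac : ((N'+1).factorial : ℚ) = (N'+1) * N'.factorial := by
    rw [Nat.factorial_succ]; push_cast; ring
  have h1 : ((N'.factorial : ℚ)) ≠ 0 := Nat.cast_ne_zero.2 (Nat.factorial_ne_zero _)
  have h2 : (((N'+1).factorial : ℚ)) ≠ 0 := Nat.cast_ne_zero.2 (Nat.factorial_ne_zero _)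
  simp only [Nat.add_sub_cancel]
  rw [hfac]
  push_cast
  field_simp
  ring
open Finset

theorem sum_range_even {M : Type*} [AddCommMonoid M] (f : ℕ → M)
    (hf : ∀ k, Odd k → f k = 0) (n : ℕ) :
    ∑ k ∈ range (2*n+1), f k = ∑ j ∈ range (n+1), f (2*j) := by
  induction n with
  | zero => simp
  | succ n ih =>
      have : 2*(n+1)+1 = (2*n+1) + 1 + 1 := by ring
      rw [this, Finset.sum_range_succ, Finset.sum_range_succ, ih, Finset.sum_range_succ,
        hf (2*n+1) ⟨n, by ring⟩]
      have : 2*n+1+1 = 2*(n+1) := by ring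
      rw [this, add_zero, Finset.sum_range_succ, Finset.sum_range_succ]

end PS

def qb (n : ℕ) : ℚ := bernoulli (2*n) / (2*n).factorial

theorem euler_conv (m : ℕ) (hm : 1 ≤ m) :
    ∑ j ∈ range (m+2), qb j * qb (m+1-j) = -(2*(m:ℚ)+1) * qb (m+1) := by
  have hN : 2 ≤ 2*m+2 := by omega
  have h := bernoulli_quad (2*m+2) hN
  have hodd : ∀ k, Odd k → (bernoulli k / (k.factorial:ℚ)) * (bernoulli (2*m+2-k) / ((2*m+2-k).factorial:ℚ)) = 0 := by
    intro k hk
    rcases eq_or_ne k 1 with rfl | hk1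
    · have : Odd (2*m+1) ∧ 1 < 2*m+1 := ⟨⟨m, by ring⟩, by omega⟩
      have : bernoulli (2*m+2-1) = 0 := by
        have h21 : 2*m+2-1 = 2*m+1 := by omega
        rw [h21, bernoulli_eq_bernoulli'_of_ne_one (by omega),
          bernoulli'_eq_zero_of_odd ⟨m, by ring⟩ (by omega)]
      rw [this]; simp
    · have : bernoulli k = 0 := by
        rw [bernoulli_eq_bernoulli'_of_ne_one hk1, bernoulli'_eq_zero_of_odd hk (by
          rcases hk with ⟨j, rfl⟩; omega)]
      rw [this]; simp
  have heven := sum_range_even (fun k => (bernoulli k / (k.factorial:ℚ)) * (bernoulli (2*m+2-k) / ((2*m+2-k).factorial:ℚ))) hodd (m+1)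
  have hrange : 2*(m+1)+1 = 2*m+2+1 := by ring
  rw [hrange] at heven
  rw [heven] at h
  have hB : bernoulli (2*m+2-1) = 0 := by
    rw [bernoulli_eq_bernoulli'_of_ne_one (by omega),
      bernoulli'_eq_zero_of_odd ⟨m, by omega⟩ (by omega)]
  rw [hB] at h
  have hsum : ∑ j ∈ range (m+2), qb j * qb (m+1-j)
      = ∑ j ∈ range (m+1+1), (bernoulli (2*j) / ((2*j).factorial:ℚ)) * (bernoulli (2*m+2-2*j) / ((2*m+2-2*j).factorial:ℚ)) := by
    apply Finset.sum_congr rfl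
    intro j hj
    have hj' : j ≤ m+1 := by have := mem_range.mp hj; omega
    have : 2*m+2-2*j = 2*(m+1-j) := by omega
    rw [qb, qb, this]
  rw [hsum, h]
  rw [qb]
  push_cast
  ring

noncomputable def rb (n : ℕ) : ℝ := (qb n : ℝ)
noncomputable def Zz (n : ℕ) : ℝ := ∑' j : ℕ, 1/(j:ℝ)^(2*n)

theorem hasSum_Zz (n : ℕ) (hn : n ≠ 0) :
    HasSum (fun j : ℕ => 1/(j:ℝ)^(2*n)) (Zz n) := by
  have h := hasSum_zeta_nat (k := n) hn
  have := h.tsum_eq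
  rw [Zz, this]
  exact h

theorem Zz_eq (n : ℕ) (hn : n ≠ 0) :
    Zz n = (-1:ℝ)^(n+1) * 2^(2*n-1) * π^(2*n) * (bernoulli (2*n):ℝ) / (2*n).factorial := by
  exact (hasSum_zeta_nat hn).tsum_eq

theorem b_val (n : ℕ) (hn : 1 ≤ n) :
    (2*π)^(2*n) * rb n = (-1:ℝ)^(n+1) * 2 * Zz n := by
  rw [Zz_eq n (by omega), rb, qb]
  have h2n : 2*n-1+1 = 2*n := by omega
  have hpow : (2:ℝ)^(2*n) = 2 * 2^(2*n-1) := by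
    rw [← pow_succ', h2n]
  have hsq : ((-1:ℝ)^(n*2)) = 1 := Even.neg_one_pow ⟨n, by ring⟩
  push_cast
  rw [mul_pow, hpow]
  field_simp
  linear_combination (-(bernoulli (2*n):ℝ)) * hsq

theorem Zz_ge_one (n : ℕ) (hn : 1 ≤ n) : 1 ≤ Zz n := by
  have h := hasSum_Zz n (by omega)
  have := le_hasSum h 1 (fun j _ => by positivity)
  simpa using this

theorem Zz_pos (n : ℕ) (hn : 1 ≤ n) : 0 < Zz n := lt_of_lt_of_le one_pos (Zz_ge_one n hn)

theorem Zz_anti {n k : ℕ} (hn : 1 ≤ n) (hnk : n ≤ k) : Zz k ≤ Zz n := by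
  refine hasSum_le (fun j => ?_) (hasSum_Zz k (by omega)) (hasSum_Zz n (by omega))
  rcases Nat.eq_zero_or_pos j with rfl | hj
  · simp [zero_pow (by omega : 2*n ≠ 0), zero_pow (by omega : 2*k ≠ 0)]
  · apply one_div_le_one_div_of_le
    · positivity
    · apply pow_le_pow_right₀ (by exact_mod_cast hj) (by omega)

theorem rb_zero : rb 0 = 1 := by simp [rb, qb]

theorem rb_sign (n : ℕ) (hn : 1 ≤ n) : 0 < (-1:ℝ)^(n+1) * rb n := by
  have h := b_val n hn
  have hp : (0:ℝ) < (2*π)^(2*n) := by positivity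
  have hsq : ((-1:ℝ)^(n*2)) = 1 := Even.neg_one_pow ⟨n, by ring⟩
  have : (-1:ℝ)^(n+1) * rb n = 2 * Zz n / (2*π)^(2*n) := by
    field_simp
    linear_combination (-1:ℝ)^(n+1) * h + 2 * Zz n * hsq
  rw [this]
  have := Zz_pos n hn
  positivity

theorem rb_ne (n : ℕ) : rb n ≠ 0 := by
  rcases Nat.eq_zero_or_pos n with rfl | hn
  · rw [rb_zero]; norm_num
  · have := rb_sign n hn
    intro h; rw [h] at this; simp at this


theorem ZZrb (m j : ℕ) (hj : j < m) :
    (2*π)^(2*m+2) * (rb (j+1) * rb (m-j)) = (-1:ℝ)^(m+1) * 4 * (Zz (j+1) * Zz (m-j)) := by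
  have h1 := b_val (j+1) (by omega)
  have h2 := b_val (m-j) (by omega)
  have hexp : (2*π)^(2*(j+1)) * (2*π)^(2*(m-j)) = (2*π)^(2*m+2) := by
    rw [← pow_add]; congr 1; omega
  have hsign : (-1:ℝ)^(j+1+1) * (-1:ℝ)^(m-j+1) = (-1:ℝ)^(m+1) := by
    rw [← pow_add]
    have h' : (j+1+1) + (m-j+1) = (m+1) + 2 := by omega
    rw [h', pow_add]
    norm_num
  calc (2*π)^(2*m+2) * (rb (j+1) * rb (m-j))
      = ((2*π)^(2*(j+1)) * rb (j+1)) * ((2*π)^(2*(m-j)) * rb (m-j)) := by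
        rw [← hexp]; ring
    _ = ((-1:ℝ)^(j+1+1) * 2 * Zz (j+1)) * ((-1:ℝ)^(m-j+1) * 2 * Zz (m-j)) := by rw [h1, h2]
    _ = ((-1:ℝ)^(j+1+1) * (-1:ℝ)^(m-j+1)) * 4 * (Zz (j+1) * Zz (m-j)) := by ring
    _ = (-1:ℝ)^(m+1) * 4 * (Zz (j+1) * Zz (m-j)) := by rw [hsign]

theorem euler_conv_real (m : ℕ) (hm : 1 ≤ m) :
    ∑ j ∈ range (m+2), rb j * rb (m+1-j) = -(2*(m:ℝ)+1) * rb (m+1) := by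
  have h := euler_conv m hm
  have := congrArg (fun q : ℚ => (q : ℝ)) h
  push_cast at this
  simpa [rb] using this

theorem middle_conv (m : ℕ) (hm : 1 ≤ m) :
    ∑ j ∈ range m, rb (j+1) * rb (m-j) = -(2*(m:ℝ)+3) * rb (m+1) := by
  have h := euler_conv_real m hm
  rw [Finset.sum_range_succ, Finset.sum_range_succ'] at h
  simp only [Nat.sub_self, Nat.sub_zero] at h
  rw [rb_zero] at h
  have hj : ∀ j ∈ range m, rb (j+1) * rb (m+1-(j+1)) = rb (j+1) * rb (m-j) := by
    intro j hj; congr 2; omega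
  rw [Finset.sum_congr rfl hj] at h
  linarith [h]

theorem ZZ_sum (m : ℕ) (hm : 1 ≤ m) :
    ∑ j ∈ range m, Zz (j+1) * Zz (m-j) = ((m:ℝ) + 3/2) * Zz (m+1) := by
  have key : ∀ j ∈ range m,
      Zz (j+1) * Zz (m-j) = (-1:ℝ)^(m+1) * (2*π)^(2*m+2) / 4 * (rb (j+1) * rb (m-j)) := by
    intro j hj
    have hjm : j < m := mem_range.mp hj
    have h1 := b_val (j+1) (by omega)
    have h2 := b_val (m-j) (by omega)
    have hmul := congrArg₂ (· * ·) h1 h2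
    have hexp : (2*π)^(2*(j+1)) * (2*π)^(2*(m-j)) = (2*π)^(2*m+2) := by
      rw [← pow_add]; congr 1; omega
    have hsign : (-1:ℝ)^(j+1+1) * (-1:ℝ)^(m-j+1) = (-1:ℝ)^(m+1) := by
      rw [← pow_add]
      have h' : (j+1+1) + (m-j+1) = (m+1) + 2 := by omega
      rw [h', pow_add]
      norm_num
    have hpi : (0:ℝ) < (2*π)^(2*m+2) := by positivity
    -- from hmul: (2π)^{2m+2} rb rb = (−1)^{m+1} 4 Z Z
    have hmul2 : (2*π)^(2*m+2) * (rb (j+1) * rb (m-j)) = (-1:ℝ)^(m+1) * 4 * (Zz (j+1) * Zz (m-j)) := by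
      calc (2*π)^(2*m+2) * (rb (j+1) * rb (m-j))
          = ((2*π)^(2*(j+1)) * rb (j+1)) * ((2*π)^(2*(m-j)) * rb (m-j)) := by
            rw [← hexp]; ring
        _ = ((-1:ℝ)^(j+1+1) * 2 * Zz (j+1)) * ((-1:ℝ)^(m-j+1) * 2 * Zz (m-j)) := by rw [h1, h2]
        _ = ((-1:ℝ)^(j+1+1) * (-1:ℝ)^(m-j+1)) * 4 * (Zz (j+1) * Zz (m-j)) := by ring
        _ = (-1:ℝ)^(m+1) * 4 * (Zz (j+1) * Zz (m-j)) := by rw [hsign]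
    have hsq : ((-1:ℝ)^(m+1))^2 = 1 := by
      rw [← pow_mul]; exact Even.neg_one_pow ⟨m+1, by ring⟩
    linear_combination (-(-1:ℝ)^(m+1)/4) * hmul2 - (Zz (j+1) * Zz (m-j)) * hsq
  rw [Finset.sum_congr rfl key, ← Finset.mul_sum, middle_conv m hm]
  have h3 := b_val (m+1) (by omega)
  have hsq : ((-1:ℝ)^(m+1))^2 = 1 := by
    rw [← pow_mul]; exact Even.neg_one_pow ⟨m+1, by ring⟩
  have hexp2 : 2*(m+1) = 2*m+2 := by ring
  rw [hexp2] at h3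
  have hsign2 : (-1:ℝ)^(m+1+1) = -(-1:ℝ)^(m+1) := by rw [pow_succ]; ring
  rw [hsign2] at h3
  linear_combination (-(2*(m:ℝ)+3)/4 * (-1:ℝ)^(m+1)) * h3 + ((2*(m:ℝ)+3)/2 * Zz (m+1)) * hsq

noncomputable def Gf (m : ℕ) (θ : ℝ) : ℝ :=
  ∑ n ∈ range (m+2), rb n * rb (m+1-n) * Real.cos ((2*(n:ℝ) - (m+1)) * θ)

theorem Gf_split (m : ℕ) (θ : ℝ) :
    Gf m θ = 2 * rb (m+1) * Real.cos (((m:ℝ)+1) * θ)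
      + ∑ n ∈ range m, rb (n+1) * rb (m-n) * Real.cos ((2*((n:ℝ)+1) - (m+1)) * θ) := by
  rw [Gf, Finset.sum_range_succ, Finset.sum_range_succ']
  have h0 : rb 0 * rb (m+1-0) * Real.cos ((2*((0:ℕ):ℝ) - (m+1)) * θ)
      = rb (m+1) * Real.cos (((m:ℝ)+1) * θ) := by
    rw [rb_zero, Nat.sub_zero]
    have e : (2*((0:ℕ):ℝ) - (m+1)) * θ = -((((m:ℝ)+1)) * θ) := by push_cast; ring
    rw [e, Real.cos_neg, one_mul]
  have hlast : rb (m+1) * rb (m+1-(m+1)) * Real.cos ((2*((m+1:ℕ):ℝ) - (m+1)) * θ)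
      = rb (m+1) * Real.cos (((m:ℝ)+1) * θ) := by
    rw [Nat.sub_self, rb_zero]
    have : (2*((m+1:ℕ):ℝ) - (m+1)) * θ = (((m:ℝ)+1)) * θ := by push_cast; ring
    rw [this]
    ring
  rw [hlast]
  have hmid : ∀ n ∈ range m, rb (n+1) * rb (m+1-(n+1)) * Real.cos ((2*((n+1:ℕ):ℝ) - (m+1)) * θ)
      = rb (n+1) * rb (m-n) * Real.cos ((2*((n:ℝ)+1) - (m+1)) * θ) := by
    intro n hn
    have : m+1-(n+1) = m-n := by omega
    rw [this]
    norm_num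
  rw [Finset.sum_congr rfl hmid, h0]
  ring

theorem kernel_eval (m k : ℕ) (hm : 1 ≤ m) (hk1 : 1 ≤ k) (hk2 : k ≤ m) :
    ∑ n ∈ range m, Real.cos ((2*((n:ℝ)+1) - (m+1)) * ((k:ℝ)*π/(m+1))) = (-1:ℝ)^(k+1) := by
  set θ := (k:ℝ)*π/(m+1) with hθ
  have hm1 : (0:ℝ) < (m:ℝ)+1 := by positivity
  have hθpos : 0 < θ := by
    rw [hθ]; apply div_pos (by positivity) hm1
  have hθlt : θ < π := by
    rw [hθ, div_lt_iff₀ hm1]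
    have : (k:ℝ) < (m:ℝ)+1 := by exact_mod_cast Nat.lt_succ_of_le hk2
    nlinarith [Real.pi_pos]
  have hsin : 0 < Real.sin θ := Real.sin_pos_of_pos_of_lt_pi hθpos hθlt
  have tele : ∀ n : ℕ, Real.sin (((m:ℝ)-2*n)*θ) - Real.sin (((m:ℝ)-2*(n+1))*θ)
      = 2 * Real.sin θ * Real.cos ((2*((n:ℝ)+1) - (m+1)) * θ) := by
    intro n
    rw [Real.sin_sub_sin]
    have e1 : (((m:ℝ)-2*n)*θ - ((m:ℝ)-2*(n+1))*θ)/2 = θ := by ring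
    have e2 : (((m:ℝ)-2*n)*θ + ((m:ℝ)-2*(n+1))*θ)/2 = -((2*((n:ℝ)+1) - (m+1)) * θ) := by ring
    rw [e1, e2, Real.cos_neg]
  have hsum2 : ∑ n ∈ range m, 2 * Real.sin θ * Real.cos ((2*((n:ℝ)+1) - (m+1)) * θ)
      = Real.sin ((m:ℝ)*θ) - Real.sin (((m:ℝ)-2*(m:ℝ))*θ) := by
    have hs := Finset.sum_range_sub' (fun j : ℕ => Real.sin (((m:ℝ)-2*(j:ℝ))*θ)) m
    have hc : ∑ n ∈ range m, 2 * Real.sin θ * Real.cos ((2*((n:ℝ)+1) - (m+1)) * θ)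
        = ∑ n ∈ range m, (Real.sin (((m:ℝ)-2*(n:ℝ))*θ) - Real.sin (((m:ℝ)-2*((n+1:ℕ):ℝ))*θ)) := by
      apply Finset.sum_congr rfl
      intro n hn
      push_cast
      rw [← tele n]
    rw [hc, hs]
    norm_num
  have hneg : Real.sin (((m:ℝ)-2*(m:ℝ))*θ) = - Real.sin ((m:ℝ)*θ) := by
    have e : ((m:ℝ)-2*(m:ℝ))*θ = -((m:ℝ)*θ) := by ring
    rw [e, Real.sin_neg]
  have hmθ : ((m:ℝ))*θ = (k:ℝ)*π - θ := by
    rw [hθ]; field_simp; ring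
  have hsinm : Real.sin ((m:ℝ)*θ) = (-1:ℝ)^(k+1) * Real.sin θ := by
    rw [hmθ, Real.sin_sub]
    have h1 : Real.sin ((k:ℝ)*π) = 0 := by
      exact_mod_cast Real.sin_nat_mul_pi k
    have h2 : Real.cos ((k:ℝ)*π) = (-1:ℝ)^k := by
      have := Real.cos_nat_mul_pi_sub 0 k
      simpa using this
    rw [h1, h2, pow_succ]
    ring
  have hfin : 2 * Real.sin θ * (∑ n ∈ range m, Real.cos ((2*((n:ℝ)+1) - (m+1)) * θ))
      = 2 * Real.sin θ * (-1:ℝ)^(k+1) := by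
    rw [Finset.mul_sum, hsum2, hneg, hsinm]
    ring
  have h2s : (2 * Real.sin θ) ≠ 0 := by positivity
  exact mul_left_cancel₀ h2s hfin
theorem G_H (m : ℕ) (hm : 1 ≤ m) (θ : ℝ) :
    (-1:ℝ)^m * (2*π)^(2*m+2)/4 * Gf m θ
      = Zz (m+1) * Real.cos (((m:ℝ)+1) * θ)
        - ∑ n ∈ range m, Zz (n+1) * Zz (m-n) * Real.cos ((2*((n:ℝ)+1) - (m+1)) * θ) := by
  have hyy : ((-1:ℝ)^m)*((-1:ℝ)^m) = 1 := by
    rw [← pow_add]; exact Even.neg_one_pow ⟨m, by ring⟩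
  rw [Gf_split, mul_add]
  have hlead : (-1:ℝ)^m * (2*π)^(2*m+2)/4 * (2 * rb (m+1) * Real.cos (((m:ℝ)+1) * θ))
      = Zz (m+1) * Real.cos (((m:ℝ)+1) * θ) := by
    have h3 := b_val (m+1) (by omega)
    have he : 2*(m+1) = 2*m+2 := by ring
    rw [he] at h3
    have hs : (-1:ℝ)^(m+1+1) = (-1:ℝ)^m := by rw [pow_succ, pow_succ]; ring
    rw [hs] at h3
    linear_combination ((-1:ℝ)^m * Real.cos (((m:ℝ)+1)*θ) / 2) * h3
      + (Zz (m+1) * Real.cos (((m:ℝ)+1)*θ)) * hyy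
  rw [hlead, Finset.mul_sum]
  congr 1
  rw [← Finset.sum_neg_distrib]
  apply Finset.sum_congr rfl
  intro n hn
  have hnm : n < m := mem_range.mp hn
  have h := ZZrb m n hnm
  have hs : (-1:ℝ)^(m+1) = (-1:ℝ)^m * (-1) := by rw [pow_succ]
  rw [hs] at h
  linear_combination ((-1:ℝ)^m * Real.cos ((2*((n:ℝ)+1) - (m+1)) * θ) / 4) * h
    - (Zz (n+1) * Zz (m-n) * Real.cos ((2*((n:ℝ)+1) - (m+1)) * θ)) * hyy

theorem G_sign (m k : ℕ) (hm : 1 ≤ m) (hk1 : 1 ≤ k) (hk2 : k ≤ m) :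
    0 < (-1:ℝ)^(m+k) * Gf m ((k:ℝ)*π/(m+1)) := by
  set θ := (k:ℝ)*π/(m+1) with hθ
  have hm1 : ((m:ℝ)+1) ≠ 0 := by positivity
  have hcosk : Real.cos (((m:ℝ)+1) * θ) = (-1:ℝ)^k := by
    have e : ((m:ℝ)+1) * θ = (k:ℝ)*π := by rw [hθ]; field_simp
    rw [e]
    have := Real.cos_nat_mul_pi_sub 0 k
    simpa using this
  set Zm := Zz (m+1) with hZm
  have hZmpos : 0 < Zm := Zz_pos (m+1) (by omega)
  have hd : ∀ n ∈ range m, 0 ≤ Zz (n+1) * Zz (m-n) - Zm := by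
    intro n hn
    have hnm : n < m := mem_range.mp hn
    have h1 : Zz (m+1) ≤ Zz (n+1) := Zz_anti (by omega) (by omega)
    have h2 : (1:ℝ) ≤ Zz (m-n) := Zz_ge_one (m-n) (by omega)
    nlinarith [hZmpos]
  have hdsum : ∑ n ∈ range m, (Zz (n+1) * Zz (m-n) - Zm) = (3/2) * Zm := by
    rw [Finset.sum_sub_distrib, ZZ_sum m hm]
    simp [hZm]
    ring
  have hker := kernel_eval m k hm hk1 hk2
  have hmid : ∑ n ∈ range m, Zz (n+1) * Zz (m-n) * Real.cos ((2*((n:ℝ)+1) - (m+1)) * θ)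
      = (∑ n ∈ range m, (Zz (n+1) * Zz (m-n) - Zm) * Real.cos ((2*((n:ℝ)+1) - (m+1)) * θ))
        + Zm * (-1:ℝ)^(k+1) := by
    rw [← hker, Finset.mul_sum, ← Finset.sum_add_distrib]
    apply Finset.sum_congr rfl
    intro n hn
    ring
  have habs : |∑ n ∈ range m, (Zz (n+1) * Zz (m-n) - Zm) * Real.cos ((2*((n:ℝ)+1) - (m+1)) * θ)|
      ≤ (3/2) * Zm := by
    calc |∑ n ∈ range m, (Zz (n+1) * Zz (m-n) - Zm) * Real.cos ((2*((n:ℝ)+1) - (m+1)) * θ)|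
        ≤ ∑ n ∈ range m, |(Zz (n+1) * Zz (m-n) - Zm) * Real.cos ((2*((n:ℝ)+1) - (m+1)) * θ)| :=
          Finset.abs_sum_le_sum_abs _ _
      _ ≤ ∑ n ∈ range m, (Zz (n+1) * Zz (m-n) - Zm) := by
          apply Finset.sum_le_sum
          intro n hn
          rw [abs_mul]
          have h1 := hd n hn
          have h2 : |Real.cos ((2*((n:ℝ)+1) - (m+1)) * θ)| ≤ 1 := Real.abs_cos_le_one _
          have h3 : |Zz (n+1) * Zz (m-n) - Zm| = Zz (n+1) * Zz (m-n) - Zm := abs_of_nonneg h1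
          rw [h3]
          nlinarith [abs_nonneg (Zz (n+1) * Zz (m-n) - Zm)]
      _ = (3/2) * Zm := hdsum
  have hH := G_H m hm θ
  rw [hcosk, hmid] at hH
  have hkH : 0 < (-1:ℝ)^k * ((-1:ℝ)^m * (2*π)^(2*m+2)/4 * Gf m θ) := by
    rw [hH]
    have hk1' : (-1:ℝ)^(k+1) = -(-1:ℝ)^k := by rw [pow_succ]; ring
    have habs' := abs_le.mp habs
    have hb : (-1:ℝ)^k = 1 ∨ (-1:ℝ)^k = -1 := by
      rcases Nat.even_or_odd k with h|h
      · left; exact h.neg_one_pow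
      · right; exact h.neg_one_pow
    rw [hk1']
    rcases hb with hb | hb <;> rw [hb] <;> nlinarith [habs'.1, habs'.2, hZmpos]
  have hGpos : 0 < (-1:ℝ)^(m+k) * Gf m θ * ((2*π)^(2*m+2)/4) := by
    have e : (-1:ℝ)^k * ((-1:ℝ)^m * (2*π)^(2*m+2)/4 * Gf m θ)
        = (-1:ℝ)^(m+k) * Gf m θ * ((2*π)^(2*m+2)/4) := by
      rw [pow_add]; ring
    rw [e] at hkH
    exact hkH
  have hp : (0:ℝ) < (2*π)^(2*m+2)/4 := by positivity
  by_contra hneg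
  push_neg at hneg
  nlinarith [hGpos, hp, hneg]

theorem ramanujanPoly_eq (m : ℕ) (z : ℂ) :
    ramanujanPoly m z = ∑ n ∈ range (m+2), ((rb n * rb (m+1-n) : ℝ) : ℂ) * z^(2*n) := by
  unfold ramanujanPoly
  apply Finset.sum_congr rfl
  intro n hn
  have hn' : n ≤ m+1 := by have := mem_range.mp hn; omega
  have he : 2*m+2-2*n = 2*(m+1-n) := by omega
  rw [he]
  congr 1
  rw [rb, rb, qb, qb]
  push_cast
  ring

theorem Gf_even (m : ℕ) (θ : ℝ) : Gf m (-θ) = Gf m θ := by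
  apply Finset.sum_congr rfl
  intro n hn
  have : (2*(n:ℝ) - (m+1)) * (-θ) = -((2*(n:ℝ) - (m+1)) * θ) := by ring
  rw [this, Real.cos_neg]

theorem continuous_Gf (m : ℕ) : Continuous (Gf m) := by
  unfold Gf
  fun_prop

theorem eval_exp (m : ℕ) (θ : ℝ) :
    ramanujanPoly m (Complex.exp (θ*Complex.I))
      = Complex.exp (((m:ℝ)+1)*θ*Complex.I) * ((Gf m θ : ℝ) : ℂ) := by
  rw [ramanujanPoly_eq]
  set c : ℕ → ℂ := fun n => ((rb n * rb (m+1-n) : ℝ) : ℂ) with hc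
  have hz : ∀ n ∈ range (m+2), c n * (Complex.exp ((θ:ℂ)*Complex.I))^(2*n)
      = Complex.exp (((m:ℝ)+1)*(θ:ℂ)*Complex.I)
        * (c n * Complex.exp ((((2*(n:ℝ) - ((m:ℝ)+1))*θ : ℝ) : ℂ)*Complex.I)) := by
    intro n hn
    rw [← Complex.exp_nat_mul]
    conv_rhs => rw [mul_left_comm, ← Complex.exp_add]
    congr 2
    push_cast
    ring
  rw [Finset.sum_congr rfl hz, ← Finset.mul_sum]
  congr 1
  set S := ∑ n ∈ range (m+2), c n * Complex.exp ((((2*(n:ℝ) - ((m:ℝ)+1))*θ : ℝ) : ℂ)*Complex.I)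
    with hS
  have hrefl : S = ∑ n ∈ range (m+2),
      c n * Complex.exp (-((((2*(n:ℝ) - ((m:ℝ)+1))*θ : ℝ) : ℂ)*Complex.I)) := by
    rw [hS, ← Finset.sum_range_reflect]
    apply Finset.sum_congr rfl
    intro j hj
    have hj' : j ≤ m+1 := by have := mem_range.mp hj; omega
    have h1 : m+2-1-j = m+1-j := by omega
    rw [h1]
    have hcc : c (m+1-j) = c j := by
      rw [hc]
      simp only
      have : m+1-(m+1-j) = j := by omega
      rw [this, mul_comm]
    rw [hcc]
    congr 1
    congr 1
    push_cast [Nat.cast_sub hj']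
    ring
  have hGf : ((Gf m θ : ℝ) : ℂ) = ∑ n ∈ range (m+2),
      c n * Complex.cos ((((2*(n:ℝ) - ((m:ℝ)+1))*θ : ℝ) : ℂ)) := by
    rw [Gf]
    push_cast [Complex.ofReal_cos]
    apply Finset.sum_congr rfl
    intro n hn
    rw [hc]
    push_cast
    ring
  have h2S : S + S = 2 * ((Gf m θ : ℝ) : ℂ) := by
    nth_rewrite 2 [hrefl]
    rw [hS, ← Finset.sum_add_distrib, hGf, Finset.mul_sum]
    apply Finset.sum_congr rfl
    intro n hn
    set w : ℂ := (((2*(n:ℝ) - ((m:ℝ)+1))*θ : ℝ) : ℂ) with hw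
    have he : Complex.exp (w*Complex.I) + Complex.exp (-(w*Complex.I)) = 2 * Complex.cos w := by
      have hneg : -(w*Complex.I) = (-w)*Complex.I := by ring
      rw [hneg, Complex.exp_mul_I, Complex.exp_mul_I, Complex.cos_neg, Complex.sin_neg]
      ring
    calc c n * Complex.exp (w*Complex.I) + c n * Complex.exp (-(w*Complex.I))
        = c n * (Complex.exp (w*Complex.I) + Complex.exp (-(w*Complex.I))) := by ring
      _ = c n * (2 * Complex.cos w) := by rw [he]
      _ = 2 * (c n * Complex.cos w) := by ring
  have h2 : (2:ℂ) * S = 2 * ((Gf m θ : ℝ) : ℂ) := by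
    rw [two_mul, h2S]
  exact mul_left_cancel₀ two_ne_zero h2

-- removed axiom: axiom rb_ne (n : ℕ) : rb n ≠ 0
-- removed axiom: axiom euler_conv_real (m : ℕ) (hm : 1 ≤ m) :

noncomputable def RRf (m : ℕ) (x : ℝ) : ℝ :=
  ∑ n ∈ range (m+2), rb n * rb (m+1-n) * x^(2*n)

theorem ramanujanPoly_real (m : ℕ) (x : ℝ) :
    ramanujanPoly m (x:ℂ) = ((RRf m x : ℝ) : ℂ) := by
  rw [ramanujanPoly_eq, RRf]
  push_cast
  rfl

theorem RRf_even (m : ℕ) (x : ℝ) : RRf m (-x) = RRf m x := by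
  apply Finset.sum_congr rfl
  intro n hn
  congr 1
  exact Even.neg_pow ⟨n, by ring⟩ x

theorem RRf_zero (m : ℕ) : RRf m 0 = rb (m+1) := by
  rw [RRf]
  rw [Finset.sum_eq_single_of_mem 0 (mem_range.mpr (by omega))]
  · simp [rb_zero]
  · intro b _ hb
    simp [zero_pow (by omega : 2*b ≠ 0)]

theorem RRf_one (m : ℕ) (hm : 1 ≤ m) : RRf m 1 = -(2*(m:ℝ)+1) * rb (m+1) := by
  rw [RRf, ← euler_conv_real m hm]
  simp

theorem continuous_RRf (m : ℕ) : Continuous (RRf m) := by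
  unfold RRf
  fun_prop

theorem RRf_large (m : ℕ) :
    ∃ t : ℝ, 1 < t ∧ 0 < rb (m+1) * RRf m t := by
  set Ms := ∑ n ∈ range (m+1), |rb n * rb (m+1-n)| with hMs
  have hMs0 : 0 ≤ Ms := Finset.sum_nonneg (fun i _ => abs_nonneg _)
  have hb : 0 < |rb (m+1)| := abs_pos.mpr (rb_ne (m+1))
  set t : ℝ := Ms/|rb (m+1)| + 2 with ht
  have ht1 : 1 < t := by
    have : 0 ≤ Ms/|rb (m+1)| := by positivity
    rw [ht]; linarith
  refine ⟨t, ht1, ?_⟩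
  have hsplit : RRf m t = (∑ n ∈ range (m+1), rb n * rb (m+1-n) * t^(2*n))
      + rb (m+1) * rb 0 * t^(2*(m+1)) := by
    rw [RRf, Finset.sum_range_succ]
    congr 2
    rw [Nat.sub_self]
  have htail : |∑ n ∈ range (m+1), rb n * rb (m+1-n) * t^(2*n)| ≤ Ms * t^(2*m) := by
    calc |∑ n ∈ range (m+1), rb n * rb (m+1-n) * t^(2*n)|
        ≤ ∑ n ∈ range (m+1), |rb n * rb (m+1-n) * t^(2*n)| := Finset.abs_sum_le_sum_abs _ _
      _ ≤ ∑ n ∈ range (m+1), |rb n * rb (m+1-n)| * t^(2*m) := by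
          apply Finset.sum_le_sum
          intro n hn
          rw [abs_mul]
          have hnm : n < m+1 := mem_range.mp hn
          have h1 : |t^(2*n)| = t^(2*n) := abs_of_nonneg (by positivity)
          rw [h1]
          have h2 : t^(2*n) ≤ t^(2*m) := pow_le_pow_right₀ (by linarith) (by omega)
          nlinarith [abs_nonneg (rb n * rb (m+1-n)), pow_nonneg (by linarith : (0:ℝ) ≤ t) (2*n)]
      _ = Ms * t^(2*m) := by rw [← Finset.sum_mul]
  have habs := abs_le.mp htail
  have hqpos : (0:ℝ) < t^(2*m) := by positivity
  have hMslt : Ms < |rb (m+1)| * t^2 := by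
    have h2 : |rb (m+1)| * t = Ms + 2*|rb (m+1)| := by
      rw [ht, mul_add, mul_div_cancel₀ _ (ne_of_gt hb)]
      ring
    nlinarith [hb, hMs0, ht1]
  have hS := habs.1
  set Sm := ∑ n ∈ range (m+1), rb n * rb (m+1-n) * t^(2*n) with hSm
  have h4 : -( |rb (m+1)| * (Ms * t^(2*m))) ≤ rb (m+1) * Sm := by
    have h5 : |rb (m+1) * Sm| ≤ |rb (m+1)| * (Ms * t^(2*m)) := by
      rw [abs_mul]
      exact mul_le_mul_of_nonneg_left htail (abs_nonneg _)
    have h6 := neg_abs_le (rb (m+1) * Sm)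
    linarith
  have hpow : t^(2*(m+1)) = t^2 * t^(2*m) := by
    rw [show 2*(m+1) = 2 + 2*m by ring, pow_add]
  rw [hsplit, rb_zero]
  have expand : rb (m+1) * (Sm + rb (m+1) * 1 * t^(2*(m+1)))
      = rb (m+1)*Sm + |rb (m+1)|^2 * (t^2 * t^(2*m)) := by
    have hsq : rb (m+1)^2 = |rb (m+1)|^2 := (sq_abs _).symm
    linear_combination (t^(2*(m+1))) * hsq + (|rb (m+1)|^2) * hpow
  rw [expand]
  have h7 : (|rb (m+1)| * t^(2*m))*Ms < (|rb (m+1)| * t^(2*m))*(|rb (m+1)| * t^2) :=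
    mul_lt_mul_of_pos_left hMslt (mul_pos hb hqpos)
  nlinarith [h4, h7]

theorem exists_tau (m k : ℕ) (hm : 1 ≤ m) (hk : k < m-1) :
    ∃ τ : ℝ, ((((k:ℝ)+1)*π/(m+1) < τ ∧ τ < ((k:ℝ)+2)*π/(m+1)) ∧ Gf m τ = 0) := by
  set a := (((k:ℝ)+1))*π/(m+1) with ha
  set b := (((k:ℝ)+2))*π/(m+1) with hb
  have hab : a ≤ b := by
    rw [ha, hb]
    apply div_le_div_of_nonneg_right _ (by positivity)  -- maybe wrong arg order
    · nlinarith [Real.pi_pos]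
  have hga := G_sign m (k+1) hm (by omega) (by omega)
  have hgb := G_sign m (k+2) hm (by omega) (by omega)
  have hca : (((k+1:ℕ)):ℝ)*π/(m+1) = a := by push_cast [ha]; ring_nf
  have hcb : (((k+2:ℕ)):ℝ)*π/(m+1) = b := by push_cast [hb]; ring_nf
  rw [hca] at hga
  rw [hcb] at hgb
  set g : ℝ → ℝ := fun θ => (-1:ℝ)^(m+k+1) * Gf m θ with hg
  have hga' : 0 < g a := by
    rw [hg]
    simpa [show m+(k+1) = m+k+1 by ring] using hga
  have hgb' : g b < 0 := by
    have he : (-1:ℝ)^(m+(k+2)) = -(-1:ℝ)^(m+k+1) := by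
      rw [show m+(k+2) = (m+k+1)+1 by ring, pow_succ]
      ring
    rw [he] at hgb
    rw [hg]
    simp only
    linarith
  have hcont : ContinuousOn g (Set.Icc a b) :=
    (continuous_const.mul (continuous_Gf m)).continuousOn
  have h0 : (0:ℝ) ∈ Set.Ioo (g b) (g a) := ⟨hgb', hga'⟩
  obtain ⟨τ, hτab, hτ0⟩ := intermediate_value_Ioo' hab hcont h0
  refine ⟨τ, ⟨hτab.1, hτab.2⟩, ?_⟩
  have hne : ((-1:ℝ)^(m+k+1)) ≠ 0 := by
    apply pow_ne_zero; norm_num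
  have : (-1:ℝ)^(m+k+1) * Gf m τ = 0 := hτ0
  exact (mul_eq_zero.mp this).resolve_left hne

theorem exists_real_roots (m : ℕ) (hm : 1 ≤ m) :
    ∃ r1 r2 : ℝ, 0 < r1 ∧ r1 < 1 ∧ 1 < r2 ∧ RRf m r1 = 0 ∧ RRf m r2 = 0 := by
  set f : ℝ → ℝ := fun x => rb (m+1) * RRf m x with hf
  have hcont : Continuous f := continuous_const.mul (continuous_RRf m)
  have hsq : 0 < rb (m+1) * rb (m+1) := mul_self_pos.mpr (rb_ne (m+1))
  have hf0 : 0 < f 0 := by rw [hf]; simpa [RRf_zero m] using hsq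
  have hf1 : f 1 < 0 := by
    rw [hf]
    simp only
    rw [RRf_one m hm]
    have hmp : (0:ℝ) < 2*(m:ℝ)+1 := by positivity
    nlinarith [hsq]
  obtain ⟨t, ht1, htpos⟩ := RRf_large m
  have hft : 0 < f t := htpos
  obtain ⟨r1, hr1m, hfr1⟩ := intermediate_value_Ioo' (by norm_num : (0:ℝ) ≤ 1)
    hcont.continuousOn (Set.mem_Ioo.mpr ⟨hf1, hf0⟩)
  obtain ⟨r2, hr2m, hfr2⟩ := intermediate_value_Ioo (le_of_lt ht1)
    hcont.continuousOn (Set.mem_Ioo.mpr ⟨hf1, hft⟩)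
  have h1 : RRf m r1 = 0 := by
    have : rb (m+1) * RRf m r1 = 0 := hfr1
    exact (mul_eq_zero.mp this).resolve_left (rb_ne _)
  have h2 : RRf m r2 = 0 := by
    have : rb (m+1) * RRf m r2 = 0 := hfr2
    exact (mul_eq_zero.mp this).resolve_left (rb_ne _)
  exact ⟨r1, r2, hr1m.1, hr1m.2, hr2m.1, h1, h2⟩

noncomputable def RP (m : ℕ) : Polynomial ℂ :=
  ∑ n ∈ range (m+2), Polynomial.C ((rb n * rb (m+1-n) : ℝ) : ℂ) * Polynomial.X ^ (2*n)

theorem RP_eval (m : ℕ) (z : ℂ) : (RP m).eval z = ramanujanPoly m z := by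
  rw [RP, ramanujanPoly_eq, Polynomial.eval_finset_sum]
  apply Finset.sum_congr rfl
  intro n hn
  simp

theorem RP_natDegree_le (m : ℕ) : (RP m).natDegree ≤ 2*m+2 := by
  rw [RP]
  apply Polynomial.natDegree_sum_le_of_forall_le
  intro n hn
  apply le_trans (Polynomial.natDegree_C_mul_le _ _)
  rw [Polynomial.natDegree_X_pow]
  have := mem_range.mp hn
  omega

theorem RP_ne_zero (m : ℕ) : RP m ≠ 0 := by
  intro h
  have hc := congrArg (fun p => Polynomial.coeff p (2*m+2)) h
  simp only [RP, Polynomial.finset_sum_coeff, Polynomial.coeff_C_mul, Polynomial.coeff_X_pow,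
    Polynomial.coeff_zero] at hc
  rw [Finset.sum_eq_single (m+1)] at hc
  · rw [show 2*m+2 = 2*(m+1) from by ring, if_pos rfl, Nat.sub_self, mul_one] at hc
    have : rb (m+1) * rb 0 = 0 := by exact_mod_cast hc
    rcases mul_eq_zero.mp this with h' | h' <;> exact rb_ne _ h'
  · intro b hb hbne
    have : ¬ (2*m+2 = 2*b) := by omega
    simp [this]
  · intro hmem
    exfalso
    exact hmem (mem_range.mpr (by omega))

theorem ramanujanPoly_nonreal_zeros_on_unit_circle (m : ℕ) (z : ℂ)
    (hroot : ramanujanPoly m z = 0) (hnonreal : z.im ≠ 0) :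
    ‖z‖ = 1 := by
  rcases Nat.eq_zero_or_pos m with rfl | hm
  · -- m = 0
    have he : ramanujanPoly 0 z = ((rb 1 : ℝ) : ℂ) * (1 + z^2) := by
      rw [ramanujanPoly_eq]
      rw [Finset.sum_range_succ, Finset.sum_range_succ, Finset.sum_range_zero]
      norm_num [rb_zero]
      ring
    rw [he] at hroot
    have h1 : (1 : ℂ) + z^2 = 0 := by
      rcases mul_eq_zero.mp hroot with h | h
      · exact absurd h (Complex.ofReal_ne_zero.mpr (rb_ne 1))
      · exact h
    have h2 : z^2 = -1 := by linear_combination h1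
    have h3 : ‖z‖^2 = 1 := by
      rw [← norm_pow, h2]
      simp
    have h4 : (‖z‖ - 1) * (‖z‖ + 1) = 0 := by linear_combination h3
    rcases mul_eq_zero.mp h4 with h | h
    · linarith
    · have := norm_nonneg z
      linarith
  · -- m ≥ 1
    obtain ⟨r1, r2, hr1p, hr11, hr21, hR1, hR2⟩ := exists_real_roots m hm
    set T : ℕ → ℝ := fun k => if h : k < m-1 then Classical.choose (exists_tau m k hm h) else 0
      with hTdef
    have hT1 : ∀ k, ∀ h : k < m-1,
        ((((k:ℝ)+1)*π/(m+1) < T k ∧ T k < ((k:ℝ)+2)*π/(m+1)) ∧ Gf m (T k) = 0) := by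
      intro k h
      rw [hTdef]
      simp only [dif_pos h]
      exact Classical.choose_spec (exists_tau m k hm h)
    have hTpos : ∀ k, k < m-1 → 0 < T k := by
      intro k h
      have h1 := (hT1 k h).1.1
      have : (0:ℝ) < ((k:ℝ)+1)*π/(m+1) := by positivity
      linarith
    have hTpi : ∀ k, k < m-1 → T k < π := by
      intro k h
      have h1 := (hT1 k h).1.2
      have h2 : ((k:ℝ)+2)*π/(m+1) < π := by
        rw [div_lt_iff₀ (by positivity : (0:ℝ) < (m:ℝ)+1)]
        have : ((k:ℝ)+2) < (m:ℝ)+1 := by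
          have : (k:ℝ) + 2 ≤ (m:ℝ) := by
            have : k + 2 ≤ m := by omega
            exact_mod_cast this
          linarith
        nlinarith [Real.pi_pos]
      linarith
    have hTmono : ∀ j k, j < k → k < m-1 → T j < T k := by
      intro j k hjk hk
      have h1 := (hT1 j (by omega)).1.2
      have h2 := (hT1 k hk).1.1
      have h3 : ((j:ℝ)+2)*π/(m+1) ≤ ((k:ℝ)+1)*π/(m+1) := by
        have hjk' : ((j:ℝ)+2) ≤ ((k:ℝ)+1) := by
          have : j + 2 ≤ k + 1 := by omega
          exact_mod_cast this
        have hjk2 : ((j:ℝ)+2)*π ≤ ((k:ℝ)+1)*π := by nlinarith [Real.pi_pos]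
        exact div_le_div_of_nonneg_right hjk2 (by positivity)
      linarith
    -- root sets
    set B1 : Finset ℂ := (range (m-1)).image (fun k => Complex.exp ((T k : ℝ)*Complex.I))
      with hB1
    set B2 : Finset ℂ := (range (m-1)).image (fun k => Complex.exp ((-(T k) : ℝ)*Complex.I))
      with hB2
    set Ar : Finset ℝ := {r1, -r1, r2, -r2} with hAr
    set A : Finset ℂ := Ar.image (fun x : ℝ => (x:ℂ)) with hA
    set S : Finset ℂ := B1 ∪ B2 ∪ A with hS
    -- cards
    have hB1card : B1.card = m-1 := by
      rw [hB1, Finset.card_image_of_injOn, Finset.card_range]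
      intro j hj k hk heq
      have hj' : j < m-1 := mem_range.mp hj
      have hk' : k < m-1 := mem_range.mp hk
      have hre := congrArg Complex.re heq
      rw [Complex.exp_ofReal_mul_I_re, Complex.exp_ofReal_mul_I_re] at hre
      have hTeq : T j = T k := by
        apply Real.injOn_cos ⟨(hTpos j hj').le, (hTpi j hj').le⟩ ⟨(hTpos k hk').le, (hTpi k hk').le⟩ hre
      rcases lt_trichotomy j k with h | h | h
      · exact absurd hTeq (ne_of_lt (hTmono j k h hk'))
      · exact h
      · exact absurd hTeq.symm (ne_of_lt (hTmono k j h hj'))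
    have hB2card : B2.card = m-1 := by
      rw [hB2, Finset.card_image_of_injOn, Finset.card_range]
      intro j hj k hk heq
      have hj' : j < m-1 := mem_range.mp hj
      have hk' : k < m-1 := mem_range.mp hk
      have hre := congrArg Complex.re heq
      rw [Complex.exp_ofReal_mul_I_re, Complex.exp_ofReal_mul_I_re, Real.cos_neg, Real.cos_neg] at hre
      have hTeq : T j = T k := by
        apply Real.injOn_cos ⟨(hTpos j hj').le, (hTpi j hj').le⟩ ⟨(hTpos k hk').le, (hTpi k hk').le⟩ hre
      rcases lt_trichotomy j k with h | h | h
      · exact absurd hTeq (ne_of_lt (hTmono j k h hk'))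
      · exact h
      · exact absurd hTeq.symm (ne_of_lt (hTmono k j h hj'))
    have hArcard : Ar.card = 4 := by
      rw [hAr]
      rw [Finset.card_insert_of_notMem, Finset.card_insert_of_notMem,
        Finset.card_insert_of_notMem, Finset.card_singleton]
      · simp only [Finset.mem_singleton]
        intro h; linarith
      · simp only [Finset.mem_insert, Finset.mem_singleton]
        push_neg
        exact ⟨by intro h; linarith, by intro h; linarith⟩
      · simp only [Finset.mem_insert, Finset.mem_singleton]
        push_neg
        exact ⟨by intro h; linarith, by intro h; linarith, by intro h; linarith⟩
    have hAcard : A.card = 4 := by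
      rw [hA, Finset.card_image_of_injective _ Complex.ofReal_injective, hArcard]
    -- im facts
    have hB1im : ∀ w ∈ B1, 0 < w.im := by
      intro w hw
      rw [hB1] at hw
      obtain ⟨k, hk, rfl⟩ := Finset.mem_image.mp hw
      have hk' : k < m-1 := mem_range.mp hk
      rw [Complex.exp_ofReal_mul_I_im]
      exact Real.sin_pos_of_pos_of_lt_pi (hTpos k hk') (hTpi k hk')
    have hB2im : ∀ w ∈ B2, w.im < 0 := by
      intro w hw
      rw [hB2] at hw
      obtain ⟨k, hk, rfl⟩ := Finset.mem_image.mp hw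
      have hk' : k < m-1 := mem_range.mp hk
      rw [Complex.exp_ofReal_mul_I_im, Real.sin_neg]
      have := Real.sin_pos_of_pos_of_lt_pi (hTpos k hk') (hTpi k hk')
      linarith
    have hAim : ∀ w ∈ A, w.im = 0 := by
      intro w hw
      rw [hA] at hw
      obtain ⟨x, hx, rfl⟩ := Finset.mem_image.mp hw
      exact Complex.ofReal_im x
    -- disjointness
    have hd12 : Disjoint B1 B2 := by
      rw [Finset.disjoint_left]
      intro w hw1 hw2
      exact absurd (hB1im w hw1) (not_lt.mpr (hB2im w hw2).le)
    have hd3 : Disjoint (B1 ∪ B2) A := by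
      rw [Finset.disjoint_left]
      intro w hw1 hw2
      rcases Finset.mem_union.mp hw1 with h | h
      · exact absurd (hAim w hw2) (ne_of_gt (hB1im w h))
      · exact absurd (hAim w hw2) (ne_of_lt (hB2im w h))
    have hScard : S.card = 2*m+2 := by
      rw [hS, Finset.card_union_of_disjoint hd3, Finset.card_union_of_disjoint hd12,
        hB1card, hB2card, hAcard]
      omega
    -- all elements of S are roots
    have hSroots : ∀ w ∈ S, (RP m).eval w = 0 := by
      intro w hw
      rw [RP_eval]
      rcases Finset.mem_union.mp hw with hw' | hw'
      · rcases Finset.mem_union.mp hw' with hw'' | hw''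
        · obtain ⟨k, hk, rfl⟩ := Finset.mem_image.mp (by rw [hB1] at hw''; exact hw'')
          have hk' : k < m-1 := mem_range.mp hk
          rw [eval_exp, (hT1 k hk').2]
          simp
        · obtain ⟨k, hk, rfl⟩ := Finset.mem_image.mp (by rw [hB2] at hw''; exact hw'')
          have hk' : k < m-1 := mem_range.mp hk
          rw [eval_exp, Gf_even, (hT1 k hk').2]
          simp
      · obtain ⟨x, hx, rfl⟩ := Finset.mem_image.mp (by rw [hA] at hw'; exact hw')
        rw [ramanujanPoly_real]
        have hRx : RRf m x = 0 := by
          rw [hAr] at hx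
          simp only [Finset.mem_insert, Finset.mem_singleton] at hx
          rcases hx with rfl | rfl | rfl | rfl
          · exact hR1
          · rw [RRf_even]; exact hR1
          · exact hR2
          · rw [RRf_even]; exact hR2
        rw [hRx]
        simp
    -- counting
    have hzS : z ∈ S := by
      by_contra hz
      have hzroot : (RP m).eval z = 0 := by rw [RP_eval]; exact hroot
      have hsub : insert z S ⊆ (RP m).roots.toFinset := by
        intro w hw
        rw [Multiset.mem_toFinset, Polynomial.mem_roots']
        refine ⟨RP_ne_zero m, ?_⟩
        rcases Finset.mem_insert.mp hw with rfl | hw'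
        · exact hzroot
        · exact hSroots w hw'
      have h1 : (insert z S).card = 2*m+3 := by
        rw [Finset.card_insert_of_notMem hz, hScard]
      have h2 := Finset.card_le_card hsub
      have h3 := Multiset.toFinset_card_le (RP m).roots
      have h4 := Polynomial.card_roots' (RP m)
      have h5 := RP_natDegree_le m
      omega
    -- conclude
    rcases Finset.mem_union.mp hzS with hz' | hz'
    · rcases Finset.mem_union.mp hz' with hz'' | hz''
      · obtain ⟨k, hk, rfl⟩ := Finset.mem_image.mp (by rw [hB1] at hz''; exact hz'')
        exact Complex.norm_exp_ofReal_mul_I _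
      · obtain ⟨k, hk, rfl⟩ := Finset.mem_image.mp (by rw [hB2] at hz''; exact hz'')
        exact Complex.norm_exp_ofReal_mul_I _
    · obtain ⟨x, hx, rfl⟩ := Finset.mem_image.mp (by rw [hA] at hz'; exact hz')
      exact absurd (Complex.ofReal_im x) hnonreal
end
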